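/- Let N ∈ ℕ∖{0}, let m₁,…,m_N ∈ 𝓜_*, and suppose there exists an index i_x with f(m_{i_x}) < f(m_i) for all i ≠ i_x, and a radius r_{i_x} > 0 such that the ball B(m_{i_x}, r_{i_x}) is contained in the interior of Att(M) for the component M ∈ 𝓜 containing m_{i_x} (with M = {m_{i_x}}). Set Δ := min_{i ≠ i_x} f(m_i) − f(m_{i_x}) > 0. If δ > 0 satisfies e^{−Δ/δ} ≤ r_{i_x} / ( (N−1)·max_{1≤i≤N} ‖m_i − m_{i_x}‖ ), then the weighted barycenter m_δ := ( Σ_{i=1}^N m_i·exp(−f(m_i)/δ) ) / ( Σ_{i=1}^N exp(−f(m_i)/δ) ) satisfies ‖m_δ − m_{i_x}‖ ≤ r_{i_x}, hence m_δ ∈ Att({m_{i_x}}) and T_f(m_δ) = m_{i_x}. -/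

import Mathlib

open MeasureTheory Filter Topology Metric Set Bornology
open scoped ENNReal NNReal Classical

noncomputable section

/-- `ℝ^d` as a Euclidean space. -/
abbrev Euc (d : ℕ) : Type := EuclideanSpace ℝ (Fin d)

/-- The family `𝓜` of connected components of local minimizers of `f`: connected sets `M`
for which there is an open `𝒱` with `M ⊊ 𝒱`, `M = argmin_{𝒱} f`, and `f > f(M)` on `𝒱 ∖ M`. -/
def MinComps {d : ℕ} (f : Euc d → ℝ) : Set (Set (Euc d)) :=
  {M | IsConnected M ∧ ∃ V : Set (Euc d), IsOpen V ∧ M ⊂ V ∧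
    M = {y | y ∈ V ∧ ∀ z ∈ V, f y ≤ f z} ∧ ∀ y ∈ V \ M, ∀ m ∈ M, f m < f y}

/-- `𝓜_* = ⋃_{M ∈ 𝓜} M`. -/
def MStar {d : ℕ} (f : Euc d → ℝ) : Set (Euc d) := ⋃ M ∈ MinComps f, M

/-- The attractor `Att(M) = {y : T_f(y) ∈ M}` of a component under the local solver `T_f`. -/
def Att {d : ℕ} (Tf : Euc d → Euc d) (M : Set (Euc d)) : Set (Euc d) := {y | Tf y ∈ M}

/-- `f(M)`, the (constant) value of `f` on a component `M`. -/
def fVal {d : ℕ} (f : Euc d → ℝ) (M : Set (Euc d)) : ℝ := sInf (f '' M)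

/-- The potential `V_x(M) = f(M) + (1/(2γ))·dist(x, closure(Att(M)))²`. -/
def Vx {d : ℕ} (f : Euc d → ℝ) (Tf : Euc d → Euc d) (x : Euc d) (γ : ℝ)
    (M : Set (Euc d)) : ℝ :=
  fVal f M + 1 / (2 * γ) * infDist x (closure (Att Tf M)) ^ 2

/-- `S_f^γ(x) = argmin_{M ∈ 𝓜} V_x(M)`. -/
def Sgamma {d : ℕ} (f : Euc d → ℝ) (Tf : Euc d → Euc d) (x : Euc d) (γ : ℝ) :
    Set (Set (Euc d)) :=
  {M | M ∈ MinComps f ∧ ∀ Q ∈ MinComps f, Vx f Tf x γ M ≤ Vx f Tf x γ Q}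

/-- The Gaussian measure `𝒩(x, s·Id)` on `ℝ^d`, given through its Lebesgue density. -/
def gaussMeasure {d : ℕ} (x : Euc d) (s : ℝ) : Measure (Euc d) :=
  volume.withDensity fun y =>
    ENNReal.ofReal ((2 * Real.pi * s) ^ (-(d : ℝ) / 2) * Real.exp (-‖y - x‖ ^ 2 / (2 * s)))

/-- The exact-expectation weighted barycenter
`m_{δ,γ} = E[T_f(Y_δ) e^{-f(T_f(Y_δ))/δ}] / E[e^{-f(T_f(Y_δ))/δ}]` for `Y_δ ∼ 𝒩(x, δγ Id)`. -/
def bary {d : ℕ} (f : Euc d → ℝ) (Tf : Euc d → Euc d) (x : Euc d) (δ γ : ℝ) : Euc d :=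
  (∫ y, Real.exp (-f (Tf y) / δ) ∂gaussMeasure x (δ * γ))⁻¹ •
    ∫ y, Real.exp (-f (Tf y) / δ) • Tf y ∂gaussMeasure x (δ * γ)

/-- Proposition B.1 in App. details: if `δ` is small enough, the
weighted barycenter of local minimizers lands in the basin of the best one. -/
theorem pbh_stmt_15 {d : ℕ} (hd : 1 ≤ d) (f : Euc d → ℝ)
    (hf_cont : Continuous f) (hf_coercive : Tendsto f (cocompact (Euc d)) atTop)
    (h_borel : ∀ M ∈ MinComps f, MeasurableSet M)
    (h_bdd : ∀ M ∈ MinComps f, IsBounded M)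
    (xstar : Euc d) (h_glob : ∀ y, f xstar ≤ f y)
    (h_uniq : ∀ y, f y = f xstar → y = xstar)
    (Tf : Euc d → Euc d) (hTf_meas : Measurable Tf)
    (hTf_ae : ∀ᵐ y : Euc d, Tf y ∈ MStar f)
    (N : ℕ) (hN : 0 < N) (m : Fin N → Euc d) (hm : ∀ i, m i ∈ MStar f)
    (ix : Fin N) (h_strict : ∀ i, i ≠ ix → f (m ix) < f (m i))
    (r : ℝ) (hr : 0 < r)
    (h_comp : {m ix} ∈ MinComps f)
    (h_ball : closedBall (m ix) r ⊆ interior (Att Tf {m ix}))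
    (Δ : ℝ) (hΔ_pos : 0 < Δ) (hΔ : ∀ i, i ≠ ix → Δ ≤ f (m i) - f (m ix))
    (δ : ℝ) (hδ : 0 < δ)
    (h_cond : ∀ i : Fin N, Real.exp (-Δ / δ) * (((N : ℝ) - 1) * ‖m i - m ix‖) ≤ r) :
    ‖((∑ i, Real.exp (-f (m i) / δ))⁻¹ • ∑ i, Real.exp (-f (m i) / δ) • m i) - m ix‖ ≤ r ∧
    ((∑ i, Real.exp (-f (m i) / δ))⁻¹ • ∑ i, Real.exp (-f (m i) / δ) • m i)
      ∈ Att Tf {m ix} ∧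
    Tf ((∑ i, Real.exp (-f (m i) / δ))⁻¹ • ∑ i, Real.exp (-f (m i) / δ) • m i) = m ix := by
  set w : Fin N → ℝ := fun i => Real.exp (-f (m i) / δ) with hwdef
  have hwpos : ∀ i, 0 < w i := fun i => Real.exp_pos _
  have hne : (Finset.univ : Finset (Fin N)).Nonempty := ⟨ix, Finset.mem_univ ix⟩
  have hS : 0 < ∑ i, w i := Finset.sum_pos (fun i _ => hwpos i) hne
  have key : ‖((∑ i, w i)⁻¹ • ∑ i, w i • m i) - m ix‖ ≤ r := by
    have h1 : ((∑ i, w i)⁻¹ • ∑ i, w i • m i) - m ix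
        = (∑ i, w i)⁻¹ • ∑ i, w i • (m i - m ix) := by
      simp only [smul_sub]
      rw [Finset.sum_sub_distrib, smul_sub, ← Finset.sum_smul,
        smul_smul, inv_mul_cancel₀ hS.ne', one_smul]
    rw [h1, norm_smul, Real.norm_eq_abs, abs_of_pos (inv_pos.mpr hS)]
    have h2 : ‖∑ i, w i • (m i - m ix)‖ ≤ ∑ i, w i * ‖m i - m ix‖ := by
      refine (norm_sum_le _ _).trans ?_
      refine Finset.sum_le_sum fun i _ => ?_
      rw [norm_smul, Real.norm_eq_abs, abs_of_pos (hwpos i)]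
    have h3 : ∑ i, w i * ‖m i - m ix‖ ≤ w ix * r := by
      rw [← Finset.sum_erase_add _ _ (Finset.mem_univ ix)]
      simp only [sub_self, norm_zero, mul_zero, add_zero]
      rcases (Finset.univ.erase ix).eq_empty_or_nonempty with he | he
      · rw [he, Finset.sum_empty]
        positivity
      · obtain ⟨j, hj⟩ := he
        have hj' : j ≠ ix := Finset.ne_of_mem_erase hj
        have hN2 : 2 ≤ N := by
          rcases Nat.lt_or_ge N 2 with h | h
          · interval_cases N
            exact absurd (Subsingleton.elim j ix) hj'
          · exact h
        have hNR : (1 : ℝ) ≤ (N : ℝ) - 1 := by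
          have : (2 : ℝ) ≤ (N : ℝ) := by exact_mod_cast hN2
          linarith
        have hNR0 : (0 : ℝ) < (N : ℝ) - 1 := by linarith
        have step : ∀ i ∈ Finset.univ.erase ix,
            w i * ‖m i - m ix‖ ≤ w ix * (r / ((N : ℝ) - 1)) := by
          intro i hi
          have hii : i ≠ ix := Finset.ne_of_mem_erase hi
          have hwle : w i ≤ w ix * Real.exp (-Δ / δ) := by
            rw [hwdef]
            simp only
            rw [← Real.exp_add]
            apply Real.exp_le_exp.mpr
            have := hΔ i hii
            rw [← add_div, div_le_div_iff_of_pos_right hδ]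
            linarith
          have hb : Real.exp (-Δ / δ) * ‖m i - m ix‖ ≤ r / ((N : ℝ) - 1) := by
            rw [le_div_iff₀ hNR0]
            calc Real.exp (-Δ / δ) * ‖m i - m ix‖ * ((N : ℝ) - 1)
                = Real.exp (-Δ / δ) * (((N : ℝ) - 1) * ‖m i - m ix‖) := by ring
              _ ≤ r := h_cond i
          calc w i * ‖m i - m ix‖ ≤ (w ix * Real.exp (-Δ / δ)) * ‖m i - m ix‖ :=
                mul_le_mul_of_nonneg_right hwle (norm_nonneg _)
            _ = w ix * (Real.exp (-Δ / δ) * ‖m i - m ix‖) := by ring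
            _ ≤ w ix * (r / ((N : ℝ) - 1)) :=
                mul_le_mul_of_nonneg_left hb (hwpos ix).le
        calc ∑ i ∈ Finset.univ.erase ix, w i * ‖m i - m ix‖
            ≤ ∑ _i ∈ Finset.univ.erase ix, w ix * (r / ((N : ℝ) - 1)) :=
              Finset.sum_le_sum step
          _ = ((Finset.univ.erase ix).card : ℝ) * (w ix * (r / ((N : ℝ) - 1))) := by
              rw [Finset.sum_const, nsmul_eq_mul]
          _ = ((N : ℝ) - 1) * (w ix * (r / ((N : ℝ) - 1))) := by
              rw [Finset.card_erase_of_mem (Finset.mem_univ ix)]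
              simp only [Finset.card_univ, Fintype.card_fin]
              rw [Nat.cast_sub hN]
              norm_num
          _ = w ix * r := by field_simp
    have h4 : (∑ i, w i)⁻¹ * (w ix * r) ≤ r := by
      rw [inv_mul_le_iff₀ hS]
      have : w ix ≤ ∑ i, w i :=
        Finset.single_le_sum (fun i _ => (hwpos i).le) (Finset.mem_univ ix)
      nlinarith [hr.le]
    calc (∑ i, w i)⁻¹ * ‖∑ i, w i • (m i - m ix)‖
        ≤ (∑ i, w i)⁻¹ * (w ix * r) :=
          mul_le_mul_of_nonneg_left (h2.trans h3) (inv_pos.mpr hS).le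
      _ ≤ r := h4
  have hmem : ((∑ i, w i)⁻¹ • ∑ i, w i • m i) ∈ Att Tf {m ix} :=
    interior_subset (h_ball (mem_closedBall_iff_norm.mpr key))
  exact ⟨key, hmem, hmem⟩
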